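/- For every s ∈ ℕ there exist constants C > 0 and B₀ ∈ (1,2) such that for every B ∈ (1, B₀) and every t > 0, | 2 log B · Σ_{j=-∞}^{∞} w_s(tB^{-2j})² − 2^{-2s}Γ(2s) | ≤ C · 2^{-2s}Γ(2s) · (B−1)² log(1/(B−1)). Equivalently, Λ_{B,s} m_B ≤ Σ_{j∈ℤ} |w_s(tB^{-2j})|² ≤ Λ_{B,s} M_B for all t > 0, where Λ_{B,s} = 2^{-2s}Γ(2s)/(2 log B) and m_B = 1 − O((B−1)² log(1/(B−1))), M_B = 1 + O((B−1)² log(1/(B−1))) as B → 1⁺. -/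

import Mathlib

noncomputable section
open MeasureTheory Real Set

/-- The weight function `w_s(x) = x^s e^{-x}`. -/
def wgt (s : ℕ) (x : ℝ) : ℝ := x ^ s * Real.exp (-x)

namespace DCW

/-- `F m x = exp (m*x - 2*exp x)` -/
def F (m x : ℝ) : ℝ := Real.exp (m * x - 2 * Real.exp x)

lemma F_pos (m x : ℝ) : 0 < F m x := Real.exp_pos _

lemma continuous_F (m : ℝ) : Continuous (F m) := by
  unfold F; fun_prop

lemma hasDerivAt_F (m x : ℝ) : HasDerivAt (F m) ((m - 2 * Real.exp x) * F m x) x := by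
  have h1 : HasDerivAt (fun x : ℝ => m * x - 2 * Real.exp x) (m - 2 * Real.exp x) x := by
    exact (((hasDerivAt_id' x).const_mul m).sub ((Real.hasDerivAt_exp x).const_mul 2)).congr_deriv (by ring)
  unfold F; simpa [mul_comm] using h1.exp

/-- first derivative -/
def F1 (m x : ℝ) : ℝ := (m - 2 * Real.exp x) * F m x

/-- second derivative -/
def F2 (m x : ℝ) : ℝ := ((m - 2 * Real.exp x) ^ 2 - 2 * Real.exp x) * F m x

lemma continuous_F1 (m : ℝ) : Continuous (F1 m) := by
  unfold F1 F; fun_prop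

lemma continuous_F2 (m : ℝ) : Continuous (F2 m) := by
  unfold F2 F; fun_prop

lemma hasDerivAt_F1 (m x : ℝ) : HasDerivAt (F1 m) (F2 m x) x := by
  have h1 : HasDerivAt (fun x : ℝ => m - 2 * Real.exp x) (-(2 * Real.exp x)) x := by
    exact ((hasDerivAt_const x m).sub ((Real.hasDerivAt_exp x).const_mul 2)).congr_deriv (by ring)
  have := h1.mul (hasDerivAt_F m x)
  refine this.congr_deriv ?_
  unfold F2 F
  ring

lemma F_le (m : ℝ) (hm : 1 ≤ m) (x : ℝ) :
    F m x ≤ Real.exp ((m + 1) ^ 2) * Real.exp (-|x|) := by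
  rw [F, ← Real.exp_add]
  apply Real.exp_le_exp.2
  rcases le_or_gt x 0 with hx | hx
  · rw [abs_of_nonpos hx]
    nlinarith [Real.exp_pos x, sq_nonneg (m + 1)]
  · rw [abs_of_pos hx]
    have h2 : 1 + x / 2 ≤ Real.exp (x / 2) := by linarith [Real.add_one_le_exp (x / 2)]
    have h3 : Real.exp x = Real.exp (x / 2) * Real.exp (x / 2) := by
      rw [← Real.exp_add]; ring_nf
    nlinarith [sq_nonneg (m + 1 - x), Real.exp_pos (x / 2), sq_nonneg (1 + x / 2)]

lemma integrable_exp_neg_abs : Integrable (fun x : ℝ => Real.exp (-|x|)) := by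
  have h1 : IntegrableOn (fun x : ℝ => Real.exp (-|x|)) (Iic 0) := by
    apply (integrableOn_exp_Iic 0).congr_fun ?_ measurableSet_Iic
    intro x hx
    simp only [mem_Iic] at hx
    show Real.exp x = Real.exp (-|x|)
    rw [abs_of_nonpos hx, neg_neg]
  have h2 : IntegrableOn (fun x : ℝ => Real.exp (-|x|)) (Ioi 0) := by
    apply ((exp_neg_integrableOn_Ioi 0 one_pos)).congr_fun ?_ measurableSet_Ioi
    intro x hx
    simp only [mem_Ioi] at hx
    show Real.exp (-1 * x) = Real.exp (-|x|)
    rw [abs_of_pos hx]; ring_nf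
  have := h1.union h2
  rwa [Iic_union_Ioi, integrableOn_univ] at this

lemma integrable_of_le_exp_neg_abs {f : ℝ → ℝ} (hc : Continuous f) (M : ℝ)
    (h : ∀ x, |f x| ≤ M * Real.exp (-|x|)) : Integrable f := by
  apply Integrable.mono' (integrable_exp_neg_abs.const_mul M) hc.aestronglyMeasurable
  filter_upwards with x
  simpa using h x

lemma integrable_F (m : ℝ) (hm : 1 ≤ m) : Integrable (F m) := by
  apply integrable_of_le_exp_neg_abs (continuous_F m) (Real.exp ((m + 1) ^ 2))
  intro x
  rw [abs_of_pos (F_pos m x)]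
  exact F_le m hm x

lemma F2_abs_le (m : ℝ) (hm : 1 ≤ m) (x : ℝ) :
    |F2 m x| ≤ (m ^ 2 + 4 * m + 6) * Real.exp ((m + 3) ^ 2) * Real.exp (-|x|) := by
  have hF := F_pos m x
  have he := Real.exp_pos x
  have key : |F2 m x| ≤ m ^ 2 * F m x + (4 * m + 2) * F (m + 1) x + 4 * F (m + 2) x := by
    have e1 : F (m + 1) x = Real.exp x * F m x := by
      unfold F; rw [← Real.exp_add]; congr 1; ring
    have e2 : F (m + 2) x = Real.exp x * Real.exp x * F m x := by
      unfold F; rw [← Real.exp_add, ← Real.exp_add]; congr 1; ring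
    rw [e1, e2]
    unfold F2
    rw [abs_mul, abs_of_pos hF]
    have : |(m - 2 * Real.exp x) ^ 2 - 2 * Real.exp x| ≤
        m ^ 2 + (4 * m + 2) * Real.exp x + 4 * (Real.exp x * Real.exp x) := by
      rw [abs_le]
      constructor <;> nlinarith [sq_nonneg (m - 2 * Real.exp x), sq_nonneg m, hm]
    nlinarith
  have b0 := F_le m hm x
  have b1 := F_le (m + 1) (by linarith) x
  have b2 := F_le (m + 2) (by linarith) x
  have hmono : Real.exp ((m + 1) ^ 2) ≤ Real.exp ((m + 3) ^ 2) := by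
    apply Real.exp_le_exp.2; nlinarith
  have hmono2 : Real.exp ((m + 2) ^ 2) ≤ Real.exp ((m + 3) ^ 2) := by
    apply Real.exp_le_exp.2; nlinarith
  have hea := (Real.exp_pos (-|x|)).le
  set E := Real.exp ((m + 3) ^ 2) * Real.exp (-|x|) with hE
  have hE0 : F m x ≤ E := b0.trans (mul_le_mul_of_nonneg_right hmono hea)
  have hE1 : F (m + 1) x ≤ E := by
    refine b1.trans (mul_le_mul_of_nonneg_right ?_ hea)
    apply Real.exp_le_exp.2; nlinarith
  have hE2 : F (m + 2) x ≤ E := by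
    refine b2.trans (mul_le_mul_of_nonneg_right ?_ hea)
    apply Real.exp_le_exp.2; nlinarith
  have c0 : m ^ 2 * F m x ≤ m ^ 2 * E :=
    mul_le_mul_of_nonneg_left hE0 (by positivity)
  have c1 : (4 * m + 2) * F (m + 1) x ≤ (4 * m + 2) * E :=
    mul_le_mul_of_nonneg_left hE1 (by nlinarith)
  have c2 : (4 : ℝ) * F (m + 2) x ≤ 4 * E :=
    mul_le_mul_of_nonneg_left hE2 (by norm_num)
  have : (m ^ 2 + 4 * m + 6) * Real.exp ((m + 3) ^ 2) * Real.exp (-|x|)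
      = m ^ 2 * E + (4 * m + 2) * E + 4 * E := by rw [hE]; ring
  linarith

lemma integrable_F2 (m : ℝ) (hm : 1 ≤ m) : Integrable (F2 m) :=
  integrable_of_le_exp_neg_abs (continuous_F2 m)
    ((m ^ 2 + 4 * m + 6) * Real.exp ((m + 3) ^ 2))
    (by intro x; exact F2_abs_le m hm x)


section Trap

/-- Trapezoid rule with exact second-derivative remainder on one interval. -/
lemma trap_local (f f1 f2 : ℝ → ℝ)
    (hd1 : ∀ x, HasDerivAt f (f1 x) x) (hd2 : ∀ x, HasDerivAt f1 (f2 x) x)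
    (hc2 : Continuous f2) (p h : ℝ) (hh : 0 < h) :
    h / 2 * (f p + f (p + h)) - ∫ x in Ioc p (p + h), f x
      = ∫ x in Ioc p (p + h), ((x - p) * (p + h - x) / 2) * f2 x := by
  have hc1 : Continuous f1 := continuous_iff_continuousAt.2 fun x => (hd2 x).continuousAt
  have hc0 : Continuous f := continuous_iff_continuousAt.2 fun x => (hd1 x).continuousAt
  set q := p + h with hq
  have hpq : p ≤ q := by simp [hq]; linarith
  rw [← intervalIntegral.integral_of_le hpq, ← intervalIntegral.integral_of_le hpq]
  have hu : ∀ x ∈ uIcc p q, HasDerivAt (fun x => (x - p) * (q - x) / 2) ((p + q) / 2 - x) x := by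
    intro x _
    have := (((hasDerivAt_id x).sub_const p).mul ((hasDerivAt_const x q).sub (hasDerivAt_id x))).div_const 2
    refine this.congr_deriv ?_
    simp only [Pi.sub_apply, id]
    ring
  have hw : ∀ x ∈ uIcc p q, HasDerivAt (fun x => (p + q) / 2 - x) (-1 : ℝ) x := by
    intro x _
    exact ((hasDerivAt_const x ((p + q) / 2)).sub (hasDerivAt_id' x)).congr_deriv (by ring)
  have ibp1 : ∫ x in p..q, ((x - p) * (q - x) / 2) * f2 x
      = - ∫ x in p..q, ((p + q) / 2 - x) * f1 x := by
    have := intervalIntegral.integral_mul_deriv_eq_deriv_mul hu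
      (fun x _ => hd2 x)
      (by apply Continuous.intervalIntegrable; fun_prop)
      (hc2.intervalIntegrable p q)
    simpa using this
  have ibp2 : ∫ x in p..q, ((p + q) / 2 - x) * f1 x
      = ((p + q) / 2 - q) * f q - ((p + q) / 2 - p) * f p + ∫ x in p..q, f x := by
    have := intervalIntegral.integral_mul_deriv_eq_deriv_mul hw
      (fun x _ => hd1 x)
      (by apply Continuous.intervalIntegrable; fun_prop)
      (hc1.intervalIntegrable p q)
    rw [this]
    rw [intervalIntegral.integral_congr (g := fun x => - f x) (fun x _ => by ring)]
    rw [intervalIntegral.integral_neg]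
    ring
  rw [ibp1, ibp2]
  have : ((p + q) / 2 - q) = -(h / 2) := by rw [hq]; ring
  have h2 : ((p + q) / 2 - p) = h / 2 := by rw [hq]; ring
  rw [this, h2]
  ring

end Trap


/-- Global trapezoid-type estimate: the Riemann sum of an integrable `C²` function over the
grid `a + jh`, `j ∈ ℤ`, differs from the integral by at most `h²/8 · ‖f''‖₁`. -/
lemma trap_global (f f1 f2 : ℝ → ℝ)
    (hd1 : ∀ x, HasDerivAt f (f1 x) x) (hd2 : ∀ x, HasDerivAt f1 (f2 x) x)
    (hc2 : Continuous f2)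
    (hfi : Integrable f) (hf2i : Integrable f2)
    (a h : ℝ) (hh : 0 < h)
    (hsum : Summable fun j : ℤ => f (a + j * h)) :
    |h * (∑' j : ℤ, f (a + j * h)) - ∫ x, f x| ≤ h ^ 2 / 8 * ∫ x, |f2 x| := by
  set I : ℤ → Set ℝ := fun j => Ioc (a + j * h) (a + (j + 1) * h) with hI
  have hUnion : (⋃ j, I j) = univ := by
    have := iUnion_Ioc_add_zsmul hh a
    simpa [hI, zsmul_eq_mul] using this
  have hdisj : Pairwise (Function.onFun Disjoint I) := by
    have := pairwise_disjoint_Ioc_add_zsmul a h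
    simpa [hI, zsmul_eq_mul] using this
  have hq : ∀ j : ℤ, a + ((j : ℝ) + 1) * h = (a + j * h) + h := by intro j; ring
  -- per-interval identity
  have key : ∀ j : ℤ,
      h / 2 * (f (a + j * h) + f (a + ((j : ℝ) + 1) * h)) - ∫ x in I j, f x
        = ∫ x in I j, ((x - (a + j * h)) * ((a + j * h) + h - x) / 2) * f2 x := by
    intro j
    have hIj : I j = Ioc (a + j * h) ((a + j * h) + h) := by
      rw [hI]; push_cast; rw [hq j]
    rw [hIj, hq j]
    exact trap_local f f1 f2 hd1 hd2 hc2 (a + j * h) h hh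
  -- per-interval bound
  have hb : ∀ j : ℤ,
      |h / 2 * (f (a + j * h) + f (a + ((j : ℝ) + 1) * h)) - ∫ x in I j, f x|
        ≤ h ^ 2 / 8 * ∫ x in I j, |f2 x| := by
    intro j
    rw [key j]
    set p := a + j * h with hp
    have hIj : I j = Ioc p (p + h) := by rw [hI, hp]; push_cast; ring_nf
    rw [hIj]
    have step1 : |∫ x in Ioc p (p + h), ((x - p) * (p + h - x) / 2) * f2 x|
        ≤ ∫ x in Ioc p (p + h), |((x - p) * (p + h - x) / 2) * f2 x| := by
      have := norm_integral_le_integral_norm (μ := volume.restrict (Ioc p (p + h)))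
        (fun x => ((x - p) * (p + h - x) / 2) * f2 x)
      simp only [Real.norm_eq_abs] at this
      exact this
    refine step1.trans ?_
    have step2 : ∫ x in Ioc p (p + h), |((x - p) * (p + h - x) / 2) * f2 x|
        ≤ ∫ x in Ioc p (p + h), h ^ 2 / 8 * |f2 x| := by
      apply setIntegral_mono_on
      · apply Continuous.integrableOn_Ioc
        fun_prop
      · exact ((hf2i.abs.const_mul _)).integrableOn
      · exact measurableSet_Ioc
      · intro x hx
        obtain ⟨hx1, hx2⟩ := hx
        rw [abs_mul]
        apply mul_le_mul_of_nonneg_right _ (abs_nonneg _)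
        rw [abs_of_nonneg (by nlinarith)]
        nlinarith [sq_nonneg (2 * x - 2 * p - h)]
    refine step2.trans ?_
    rw [integral_const_mul]
  -- summation
  set S := ∑' j : ℤ, f (a + j * h) with hS
  have hS1 : HasSum (fun j : ℤ => f (a + j * h)) S := hsum.hasSum
  have hS2 : HasSum (fun j : ℤ => f (a + ((j : ℝ) + 1) * h)) S := by
    have h2 := ((Equiv.addRight (1 : ℤ)).hasSum_iff).2 hS1
    refine h2.congr_fun fun j => ?_
    simp only [Function.comp, Equiv.coe_addRight]
    push_cast
    ring_nf
  have hT : HasSum (fun j : ℤ => ∫ x in I j, f x) (∫ x, f x) := by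
    have := hasSum_integral_iUnion (s := I) (fun j => measurableSet_Ioc) hdisj
      (by rw [hUnion]; exact hfi.integrableOn)
    rwa [hUnion, setIntegral_univ] at this
  have hT2 : HasSum (fun j : ℤ => ∫ x in I j, |f2 x|) (∫ x, |f2 x|) := by
    have := hasSum_integral_iUnion (s := I) (fun j => measurableSet_Ioc) hdisj
      (by rw [hUnion]; exact hf2i.abs.integrableOn)
    rwa [hUnion, setIntegral_univ] at this
  have hE : HasSum
      (fun j : ℤ => h / 2 * (f (a + j * h) + f (a + ((j : ℝ) + 1) * h)) - ∫ x in I j, f x)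
      (h * S - ∫ x, f x) := by
    have := ((hS1.add hS2).mul_left (h / 2)).sub hT
    rw [show h * S - ∫ x, f x = h / 2 * (S + S) - ∫ x, f x by ring]
    exact this
  rw [← hE.tsum_eq]
  have hsummand : Summable (fun j : ℤ =>
      |h / 2 * (f (a + j * h) + f (a + ((j : ℝ) + 1) * h)) - ∫ x in I j, f x|) := by
    apply Summable.of_nonneg_of_le (fun j => abs_nonneg _) hb
    exact (hT2.mul_left (h ^ 2 / 8)).summable
  calc |∑' j : ℤ, (h / 2 * (f (a + j * h) + f (a + ((j : ℝ) + 1) * h)) - ∫ x in I j, f x)|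
      ≤ ∑' j : ℤ, |h / 2 * (f (a + j * h) + f (a + ((j : ℝ) + 1) * h)) - ∫ x in I j, f x| := by
        simpa [Real.norm_eq_abs] using norm_tsum_le_tsum_norm (f := fun j : ℤ =>
          h / 2 * (f (a + j * h) + f (a + ((j : ℝ) + 1) * h)) - ∫ x in I j, f x)
          (by simpa [Real.norm_eq_abs] using hsummand)
    _ ≤ ∑' j : ℤ, h ^ 2 / 8 * ∫ x in I j, |f2 x| :=
        Summable.tsum_le_tsum hb hsummand (hT2.mul_left (h ^ 2 / 8)).summable
    _ = h ^ 2 / 8 * ∫ x, |f2 x| := (hT2.mul_left (h ^ 2 / 8)).tsum_eq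


lemma integral_F (m : ℝ) (hm : 1 ≤ m) :
    ∫ x, F m x = (1 / 2 : ℝ) ^ (m : ℝ) * Real.Gamma m := by
  have hcv := integral_image_eq_integral_abs_deriv_smul (s := (univ : Set ℝ))
    MeasurableSet.univ (f' := Real.exp)
    (fun x _ => (Real.hasDerivAt_exp x).hasDerivWithinAt)
    Real.exp_injective.injOn
    (fun y => y ^ (m - 1) * Real.exp (-(2 * y)))
  rw [image_univ, Real.range_exp] at hcv
  rw [← Real.integral_rpow_mul_exp_neg_mul_Ioi (by linarith : (0:ℝ) < m)
    (by norm_num : (0:ℝ) < 2), hcv, setIntegral_univ]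
  apply integral_congr_ae
  filter_upwards with x
  rw [F, smul_eq_mul, abs_of_pos (Real.exp_pos x),
    Real.rpow_def_of_pos (Real.exp_pos x), Real.log_exp, ← Real.exp_add, ← Real.exp_add]
  congr 1
  ring

lemma natAbs_cast_abs (j : ℤ) : ((j.natAbs : ℝ)) = |(j : ℝ)| := by
  simp [Nat.cast_natAbs]

lemma summable_F (m : ℝ) (hm : 1 ≤ m) (a h : ℝ) (hh : 0 < h) :
    Summable fun j : ℤ => F m (a + j * h) := by
  set r := Real.exp (-h) with hrdef
  have hr0 : 0 ≤ r := (Real.exp_pos _).le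
  have hr1 : r < 1 := by
    have := Real.exp_lt_exp.2 (neg_lt_zero.2 hh)
    rwa [Real.exp_zero] at this
  set M : ℝ := Real.exp ((m + 1) ^ 2) * Real.exp |a| with hM
  have key : ∀ j : ℤ, F m (a + j * h) ≤ M * r ^ j.natAbs := by
    intro j
    refine (F_le m hm _).trans ?_
    rw [hM, mul_assoc]
    apply mul_le_mul_of_nonneg_left _ (Real.exp_pos _).le
    have habs : (j.natAbs : ℝ) * h - |a| ≤ |a + j * h| := by
      have h1 : |(j : ℝ) * h| ≤ |a + (j : ℝ) * h| + |a| :=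
        calc |(j : ℝ) * h| = |(a + (j : ℝ) * h) + (-a)| := by ring_nf
          _ ≤ |a + (j : ℝ) * h| + |(-a)| := abs_add_le _ _
          _ = |a + (j : ℝ) * h| + |a| := by rw [abs_neg]
      have h3 : |(j : ℝ) * h| = (j.natAbs : ℝ) * h := by
        rw [abs_mul, abs_of_pos hh, natAbs_cast_abs]
      linarith
    calc Real.exp (-|a + (j : ℝ) * h|)
        ≤ Real.exp (|a| + (j.natAbs : ℝ) * (-h)) := by
          apply Real.exp_le_exp.2; nlinarith
      _ = Real.exp |a| * r ^ j.natAbs := by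
          rw [Real.exp_add, Real.exp_nat_mul]
  have hMr : Summable fun j : ℤ => M * r ^ j.natAbs := by
    apply Summable.mul_left
    apply Summable.of_nat_of_neg
    · simpa using summable_geometric_of_lt_one hr0 hr1
    · simpa using summable_geometric_of_lt_one hr0 hr1
  exact Summable.of_nonneg_of_le (fun j => (F_pos m _).le) key hMr

end DCW

/-- For every shape parameter `s ∈ ℕ` (`s ≥ 1`) there exist constants `C > 0` and
`B₀ ∈ (1,2)` such that for every `B ∈ (1, B₀)` and every `t > 0`,
`| 2 log B · Σ_{j∈ℤ} w_s(tB^{-2j})² − 2^{-2s}Γ(2s) | ≤ C · 2^{-2s}Γ(2s) · (B−1)² log(1/(B−1))`;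
i.e. `Λ_{B,s} m_B ≤ Σ_{j∈ℤ} |w_s(tB^{-2j})|² ≤ Λ_{B,s} M_B` with
`Λ_{B,s} = 2^{-2s}Γ(2s)/(2 log B)` and `m_B, M_B = 1 ∓ O((B−1)² log(1/(B−1)))` as `B → 1⁺`. -/
theorem daubechies_criterion_weight (s : ℕ) (hs : 1 ≤ s) :
    ∃ C : ℝ, 0 < C ∧ ∃ B₀ : ℝ, 1 < B₀ ∧ B₀ < 2 ∧
      ∀ B : ℝ, 1 < B → B < B₀ → ∀ t : ℝ, 0 < t →
        |2 * Real.log B * ∑' j : ℤ, (wgt s (t * B ^ (-2 * j))) ^ 2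
            - Real.Gamma (2 * s) / 2 ^ (2 * s)| ≤
          C * (Real.Gamma (2 * s) / 2 ^ (2 * s)) * (B - 1) ^ 2 * Real.log (1 / (B - 1)) := by
  classical
  set m : ℝ := 2 * (s : ℝ) with hmdef
  have hm1 : (1 : ℝ) ≤ m := by
    have : (1 : ℝ) ≤ (s : ℝ) := by exact_mod_cast hs
    rw [hmdef]; linarith
  have hΓpos : 0 < Real.Gamma (2 * (s : ℝ)) := Real.Gamma_pos_of_pos (by linarith)
  set Γ2 : ℝ := Real.Gamma (2 * (s : ℝ)) / 2 ^ (2 * s) with hΓ2def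
  have hΓ2pos : 0 < Γ2 := by
    rw [hΓ2def]; positivity
  set J : ℝ := ∫ x, |DCW.F2 m x| with hJdef
  have hJ0 : 0 ≤ J := integral_nonneg fun x => abs_nonneg _
  refine ⟨max 1 (J / Γ2), lt_of_lt_of_le one_pos (le_max_left _ _), 5/4, by norm_num,
    by norm_num, ?_⟩
  intro B hB1 hB2 t ht
  set C : ℝ := max 1 (J / Γ2) with hCdef
  have hC1 : (1 : ℝ) ≤ C := le_max_left _ _
  have hCJ : J ≤ C * Γ2 := by
    have := le_max_right (1 : ℝ) (J / Γ2)
    calc J = J / Γ2 * Γ2 := by field_simp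
      _ ≤ C * Γ2 := mul_le_mul_of_nonneg_right this hΓ2pos.le
  have hBpos : (0 : ℝ) < B := by linarith
  have hlogB : 0 < Real.log B := Real.log_pos hB1
  set h : ℝ := 2 * Real.log B with hhdef
  have hh : 0 < h := by rw [hhdef]; linarith
  set a : ℝ := Real.log t with hadef
  -- rewrite the summand
  have hterm : ∀ j : ℤ, (wgt s (t * B ^ (-2 * j))) ^ 2 = DCW.F m (a + (-(j : ℝ)) * h) := by
    intro j
    have hX : t * B ^ (-2 * j) = Real.exp (a + (-(j : ℝ)) * h) := by
      have h1 : B ^ (-2 * j) = Real.exp ((((-2 * j : ℤ)) : ℝ) * Real.log B) := by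
        rw [← Real.rpow_intCast B (-2 * j), Real.rpow_def_of_pos hBpos]
        ring_nf
      rw [h1, ← Real.exp_log ht, ← Real.exp_add]
      congr 1
      push_cast
      rw [hhdef, hadef]
      ring
    rw [hX, wgt]
    rw [← Real.exp_nat_mul, ← Real.exp_add]
    set u : ℝ := a + (-(j : ℝ)) * h
    rw [← Real.exp_nat_mul, DCW.F]
    congr 1
    push_cast
    rw [hmdef]
    ring
  have hsum_eq : ∑' j : ℤ, (wgt s (t * B ^ (-2 * j))) ^ 2 = ∑' j : ℤ, DCW.F m (a + j * h) := by
    rw [tsum_congr hterm]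
    have := (Equiv.neg ℤ).tsum_eq (fun j : ℤ => DCW.F m (a + j * h))
    rw [← this]
    apply tsum_congr
    intro j
    simp only [Equiv.neg_apply]
    push_cast
    ring_nf
  -- main estimate
  have hint : ∫ x, DCW.F m x = Γ2 := by
    rw [DCW.integral_F m hm1, hΓ2def, hmdef]
    have : ((2 * (s:ℝ)) : ℝ) = ((2 * s : ℕ) : ℝ) := by push_cast; ring
    rw [this, Real.rpow_natCast]
    rw [div_pow, one_pow]
    ring
  have hmain := DCW.trap_global (DCW.F m) (DCW.F1 m) (DCW.F2 m)
    (DCW.hasDerivAt_F m) (DCW.hasDerivAt_F1 m) (DCW.continuous_F2 m)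
    (DCW.integrable_F m hm1) (DCW.integrable_F2 m hm1) a h hh
    (DCW.summable_F m hm1 a h hh)
  rw [hint, ← hJdef] at hmain
  rw [hsum_eq]
  have hgoal : |h * ∑' j : ℤ, DCW.F m (a + j * h) - Γ2| ≤ h ^ 2 / 8 * J := hmain
  have hhB : h ≤ 2 * (B - 1) := by
    rw [hhdef]
    have := Real.log_le_sub_one_of_pos hBpos
    linarith
  have hL : (1 : ℝ) ≤ Real.log (1 / (B - 1)) := by
    have hB14 : B - 1 < 1/4 := by linarith
    have hBpos' : (0 : ℝ) < B - 1 := by linarith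
    have h4 : (4 : ℝ) < 1 / (B - 1) := by
      rw [lt_div_iff₀ hBpos']
      linarith
    have : Real.exp 1 < 1 / (B - 1) := by
      have := Real.exp_one_lt_d9
      linarith
    have := (Real.lt_log_iff_exp_lt (by linarith : (0:ℝ) < 1 / (B - 1))).2 this
    linarith
  have hh24 : h ^ 2 ≤ 4 * (B - 1) ^ 2 := by nlinarith
  have hEbound : |h * ∑' j : ℤ, DCW.F m (a + j * h) - Γ2| ≤ (B - 1) ^ 2 / 2 * J := by
    refine hgoal.trans ?_
    nlinarith
  show |2 * Real.log B * ∑' j : ℤ, DCW.F m (a + j * h) - Γ2| ≤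
      C * Γ2 * (B - 1) ^ 2 * Real.log (1 / (B - 1))
  rw [← hhdef]
  refine hEbound.trans ?_
  have hsq : (0:ℝ) ≤ (B - 1) ^ 2 := sq_nonneg _
  have hCG : 0 ≤ C * Γ2 := by positivity
  nlinarith [mul_le_mul_of_nonneg_left hCJ hsq,
    mul_le_mul_of_nonneg_left hL (mul_nonneg hCG hsq)]
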